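/- Let T ⊂ ℝ³ with marked point x_T and ℓ ≥ 0. Then P^ℓ(T)³ = R^ℓ(T) ⊕ R^{c,ℓ}(T) where R^ℓ(T) = curl P^{ℓ+1}(T)³ and R^{c,ℓ}(T) = (x - x_T) P^{ℓ-1}(T). -/

import Mathlib

open MvPolynomial

/-- ℝ³-valued polynomials of total degree ≤ ℓ on an element `T ⊂ ℝ³`. -/
def PvecT (ℓ : ℕ) : Set ((Fin 3 → ℝ) → (Fin 3 → ℝ)) :=
  {v | ∃ p : Fin 3 → MvPolynomial (Fin 3) ℝ,
    (∀ i, (p i).totalDegree ≤ ℓ) ∧ ∀ x i, v x i = eval x (p i)}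

/-- `R^ℓ(T) = curl P^{ℓ+1}(T)³`. -/
def RolyT (ℓ : ℕ) : Set ((Fin 3 → ℝ) → (Fin 3 → ℝ)) :=
  {v | ∃ w : Fin 3 → MvPolynomial (Fin 3) ℝ, (∀ i, (w i).totalDegree ≤ ℓ + 1) ∧
    ∀ x, v x 0 = eval x (pderiv 1 (w 2)) - eval x (pderiv 2 (w 1)) ∧
         v x 1 = eval x (pderiv 2 (w 0)) - eval x (pderiv 0 (w 2)) ∧
         v x 2 = eval x (pderiv 0 (w 1)) - eval x (pderiv 1 (w 0))}

/-- `R^{c,ℓ}(T) = (x - x_T) P^{ℓ-1}(T)`, with the convention `P^{-1} = {0}`. -/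
def RolyCT (ℓ : ℕ) (xT : Fin 3 → ℝ) : Set ((Fin 3 → ℝ) → (Fin 3 → ℝ)) :=
  {v | ∃ q : MvPolynomial (Fin 3) ℝ, (q.totalDegree + 1 ≤ ℓ ∨ q = 0) ∧
    ∀ x i, v x i = (x i - xT i) * eval x q}

namespace Helmholtz3DAux

open MvPolynomial Finsupp

noncomputable section

abbrev MvP3 := MvPolynomial (Fin 3) ℝ

lemma finsupp_sub_single_add {m : Fin 3 →₀ ℕ} {i : Fin 3} (h : 1 ≤ m i) :
    m - Finsupp.single i 1 + Finsupp.single i 1 = m := by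
  ext j
  by_cases hj : j = i
  · subst hj; simp [Finsupp.single_apply]; omega
  · simp [Finsupp.single_apply, Ne.symm hj, hj]

lemma finsupp_sum_sub_single {m : Fin 3 →₀ ℕ} {i : Fin 3} (h : 1 ≤ m i) :
    (m - Finsupp.single i 1).sum (fun _ n => n) + 1 = m.sum (fun _ n => n) := by
  conv_rhs => rw [← finsupp_sub_single_add h]
  rw [Finsupp.sum_add_index' (fun _ => rfl) (fun _ _ _ => rfl)]
  simp

lemma tdeg_pderiv_le (i : Fin 3) (p : MvP3) {d : ℕ} (h : p.totalDegree ≤ d + 1) :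
    (pderiv i p).totalDegree ≤ d := by
  rw [p.as_sum, map_sum]
  refine (totalDegree_finset_sum _ _).trans (Finset.sup_le fun m hm => ?_)
  rw [pderiv_monomial]
  by_cases hmi : 1 ≤ m i
  · refine (totalDegree_monomial_le _ _).trans ?_
    simp only [Function.id_def]
    have := finsupp_sum_sub_single hmi
    have hle := le_totalDegree hm
    omega
  · have : m i = 0 := by omega
    simp [this]

lemma X_mul_pderiv_monomial (i : Fin 3) (m : Fin 3 →₀ ℕ) (c : ℝ) :
    X i * pderiv i (monomial m c) = monomial m (c * m i) := by
  rw [pderiv_monomial, X, monomial_mul]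
  by_cases hmi : 1 ≤ m i
  · rw [add_comm, finsupp_sub_single_add hmi, one_mul]
  · have : m i = 0 := by omega
    simp [this]

/-- shift substitution `x ↦ x + c`. -/
def sh (c : Fin 3 → ℝ) : MvP3 →ₐ[ℝ] MvP3 := aeval (fun i => X i + C (c i))

lemma sh_X (c : Fin 3 → ℝ) (i : Fin 3) : sh c (X i) = X i + C (c i) := by simp [sh]

lemma sh_sh (c c' : Fin 3 → ℝ) (p : MvP3) : sh c (sh c' p) = sh (c + c') p := by
  have h : sh c (sh c' p) = aeval (fun i => sh c (X i + C (c' i))) p :=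
    comp_aeval_apply _ _ _
  have h2 : (fun i => sh c (X i + C (c' i))) = fun i : Fin 3 => X i + C ((c + c') i) := by
    funext i; simp [sh, C_add, add_assoc]
  rw [h, h2]; rfl

lemma sh_zero (p : MvP3) : sh 0 p = p := by
  show aeval _ p = p
  rw [show (fun i => X i + C ((0 : Fin 3 → ℝ) i)) = (X : Fin 3 → MvP3) by funext i; simp]
  exact aeval_X_left_apply p

lemma sh_neg_sh (c : Fin 3 → ℝ) (p : MvP3) : sh (-c) (sh c p) = p := by
  rw [sh_sh, neg_add_cancel, sh_zero]

lemma pderiv_sh (c : Fin 3 → ℝ) (j : Fin 3) (p : MvP3) :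
    pderiv j (sh c p) = sh c (pderiv j p) := by
  induction p using MvPolynomial.induction_on with
  | C a => simp [sh, pderiv_C]
  | add p q hp hq => simp [map_add, hp, hq]
  | mul_X p i hp =>
      by_cases h : j = i
      · subst h
        simp [map_mul, map_add, sh_X, pderiv_mul, pderiv_C, pderiv_X_self, hp]
      · simp only [map_mul, map_add, sh_X, pderiv_mul, pderiv_C, hp,
          pderiv_X_of_ne (Ne.symm h), mul_zero, add_zero, map_zero]

lemma tdeg_sh_le (c : Fin 3 → ℝ) (p : MvP3) : (sh c p).totalDegree ≤ p.totalDegree := by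
  conv_lhs => rw [p.as_sum]
  rw [map_sum]
  refine (totalDegree_finset_sum _ _).trans (Finset.sup_le fun m hm => ?_)
  rw [monomial_eq, map_mul]
  refine (totalDegree_mul _ _).trans ?_
  have h1 : ((sh c) (C (coeff m p))).totalDegree = 0 := by simp [sh, totalDegree_C]
  rw [h1, zero_add]
  rw [Finsupp.prod, map_prod]
  refine (totalDegree_finset_prod _ _).trans ?_
  refine le_trans ?_ (le_totalDegree hm)
  rw [Finsupp.sum_of_support_subset m (le_refl m.support) _ (fun _ _ => rfl)]
  refine Finset.sum_le_sum fun i _ => ?_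
  rw [map_pow, sh_X]
  refine (totalDegree_pow _ _).trans ?_
  have : (X i + C (c i) : MvP3).totalDegree ≤ 1 := by
    refine (totalDegree_add _ _).trans ?_
    simp [totalDegree_X, totalDegree_C]
  calc m i * (X i + C (c i) : MvP3).totalDegree ≤ m i * 1 := Nat.mul_le_mul_left _ this
    _ = m i := Nat.mul_one _

lemma pderiv_comm (i j : Fin 3) (p : MvP3) :
    pderiv i (pderiv j p) = pderiv j (pderiv i p) := by
  induction p using MvPolynomial.induction_on with
  | C a => simp [pderiv_C]
  | add p q hp hq => simp [map_add, hp, hq]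
  | mul_X p k hp =>
      simp only [pderiv_mul, map_add, pderiv_mul, hp]
      have hXi : pderiv i (pderiv j (X k) : MvP3) = 0 := by
        rcases eq_or_ne j k with rfl | h
        · simp
        · simp [pderiv_X_of_ne (Ne.symm h)]
      have hXj : pderiv j (pderiv i (X k) : MvP3) = 0 := by
        rcases eq_or_ne i k with rfl | h
        · simp
        · simp [pderiv_X_of_ne (Ne.symm h)]
      rw [hXi, hXj]
      ring

def curl3 (w : Fin 3 → MvP3) : Fin 3 → MvP3 :=
  ![pderiv 1 (w 2) - pderiv 2 (w 1), pderiv 2 (w 0) - pderiv 0 (w 2),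
    pderiv 0 (w 1) - pderiv 1 (w 0)]

lemma div_curl3 (w : Fin 3 → MvP3) :
    pderiv 0 (curl3 w 0) + pderiv 1 (curl3 w 1) + pderiv 2 (curl3 w 2) = 0 := by
  simp only [curl3, Matrix.cons_val_zero, Matrix.cons_val_one, Matrix.head_cons,
    Matrix.cons_val_two, Matrix.tail_cons, map_sub]
  rw [pderiv_comm 0 1 (w 2), pderiv_comm 0 2 (w 1), pderiv_comm 1 2 (w 0)]
  ring

lemma coeff_X_mul_pderiv (i : Fin 3) (s : MvP3) (m : Fin 3 →₀ ℕ) :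
    coeff m (X i * pderiv i s) = coeff m s * m i := by
  conv_lhs => rw [s.as_sum, map_sum, Finset.mul_sum]
  rw [Finset.sum_congr rfl (fun m' _ => X_mul_pderiv_monomial i m' _)]
  rw [coeff_sum]
  simp only [coeff_monomial]
  rw [Finset.sum_ite_eq' s.support m (fun m' => coeff m' s * (m' i : ℝ))]
  by_cases hm : m ∈ s.support
  · simp [hm]
  · rw [MvPolynomial.notMem_support_iff] at hm
    simp [hm]

lemma euler_zero (s : MvP3)
    (h : C 3 * s + (X 0 * pderiv 0 s + X 1 * pderiv 1 s + X 2 * pderiv 2 s) = 0) :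
    s = 0 := by
  ext m
  have hc := congrArg (coeff m) h
  simp only [coeff_add, coeff_C_mul, coeff_X_mul_pderiv, coeff_zero] at hc
  have : coeff m s * (3 + ((m 0 : ℝ) + m 1 + m 2)) = 0 := by linarith
  have hpos : (3 + ((m 0 : ℝ) + m 1 + m 2)) ≠ 0 := by positivity
  have := mul_eq_zero.mp this
  simp [coeff_zero]
  tauto

def Good0 (ℓ : ℕ) (p : Fin 3 → MvP3) : Prop :=
  ∃ w : Fin 3 → MvP3, ∃ q : MvP3, (∀ i, (w i).totalDegree ≤ ℓ + 1) ∧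
    (q.totalDegree + 1 ≤ ℓ ∨ q = 0) ∧ ∀ j, p j = curl3 w j + X j * q

lemma good0_zero (ℓ : ℕ) : Good0 ℓ 0 := by
  refine ⟨0, 0, by simp, Or.inr rfl, fun j => ?_⟩
  fin_cases j <;> simp [curl3]

lemma curl3_add (w w' : Fin 3 → MvP3) (j : Fin 3) :
    curl3 (w + w') j = curl3 w j + curl3 w' j := by
  fin_cases j <;> simp [curl3] <;> ring

lemma good0_add {ℓ : ℕ} {p p' : Fin 3 → MvP3} (h : Good0 ℓ p) (h' : Good0 ℓ p') :
    Good0 ℓ (p + p') := by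
  obtain ⟨w, q, hw, hq, hp⟩ := h
  obtain ⟨w', q', hw', hq', hp'⟩ := h'
  refine ⟨w + w', q + q', fun i => ?_, ?_, fun j => ?_⟩
  · exact (totalDegree_add _ _).trans (max_le (hw i) (hw' i))
  · rcases hq with hq | rfl
    · rcases hq' with hq' | rfl
      · left
        have h3 := totalDegree_add q q'
        rcases max_cases q.totalDegree q'.totalDegree with ⟨he, _⟩ | ⟨he, _⟩ <;> omega
      · rw [add_zero]; exact Or.inl hq
    · rw [zero_add]; exact hq'
  · rw [Pi.add_apply, hp j, hp' j, curl3_add]; ring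

lemma good0_single0 {ℓ : ℕ} (m : Fin 3 →₀ ℕ) (c : ℝ) (h : m.sum (fun _ n => n) ≤ ℓ) :
    Good0 ℓ (Pi.single 0 (monomial m c)) := by
  set k := m.sum (fun _ n => n) with hk
  have hk2 : (k : ℝ) + 2 ≠ 0 := by positivity
  set v : MvP3 := monomial m (c / (k + 2)) with hv
  have hvdeg : v.totalDegree ≤ k := (totalDegree_monomial_le _ _).trans_eq rfl
  have hsum : (m 0 : ℝ) + m 1 + m 2 = k := by
    rw [hk, Finsupp.sum_fintype _ _ (fun _ => rfl), Fin.sum_univ_three]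
    push_cast
    ring
  refine ⟨![0, -(X 2 * v), X 1 * v], pderiv 0 v, fun i => ?_, ?_, fun j => ?_⟩
  · fin_cases i
    · simp
    · show totalDegree (-(X 2 * v)) ≤ ℓ + 1
      rw [totalDegree_neg]
      refine (totalDegree_mul _ _).trans ?_
      have := totalDegree_X (R := ℝ) (2 : Fin 3)
      omega
    · show totalDegree (X 1 * v) ≤ ℓ + 1
      refine (totalDegree_mul _ _).trans ?_
      have := totalDegree_X (R := ℝ) (1 : Fin 3)
      omega
  · by_cases h0 : 1 ≤ m 0
    · left
      have h1 := finsupp_sum_sub_single (m := m) (i := 0) h0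
      have h2 : (pderiv 0 v).totalDegree ≤ (m - Finsupp.single 0 1).sum (fun _ n => n) := by
        rw [hv, pderiv_monomial]
        exact (totalDegree_monomial_le _ _).trans_eq rfl
      omega
    · right
      have h00 : m 0 = 0 := by omega
      rw [hv, pderiv_monomial, h00]
      simp
  · have e0 := X_mul_pderiv_monomial 0 m (c / (k + 2))
    have e1 := X_mul_pderiv_monomial 1 m (c / (k + 2))
    have e2 := X_mul_pderiv_monomial 2 m (c / (k + 2))
    rw [← hv] at e0 e1 e2
    fin_cases j
    · show monomial m c = curl3 _ 0 + X 0 * pderiv 0 v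
      have expand : curl3 ![0, -(X 2 * v), X 1 * v] 0
          = v + X 1 * pderiv 1 v + (v + X 2 * pderiv 2 v) := by
        simp [curl3, pderiv_mul]
        ring
      rw [expand, e1, e2, e0, hv, ← map_add, ← map_add, ← map_add, ← map_add]
      congr 1
      have hdc : c / ((k : ℝ) + 2) * ((k : ℝ) + 2) = c := div_mul_cancel₀ c hk2
      linear_combination (-(c / ((k : ℝ) + 2))) * hsum - hdc
    · show (0 : MvP3) = curl3 _ 1 + X 1 * pderiv 0 v
      simp [curl3, pderiv_mul, pderiv_X_of_ne (show (1 : Fin 3) ≠ 0 by decide)]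
    · show (0 : MvP3) = curl3 _ 2 + X 2 * pderiv 0 v
      simp [curl3, pderiv_mul, pderiv_X_of_ne (show (2 : Fin 3) ≠ 0 by decide)]


lemma good0_single1 {ℓ : ℕ} (m : Fin 3 →₀ ℕ) (c : ℝ) (h : m.sum (fun _ n => n) ≤ ℓ) :
    Good0 ℓ (Pi.single 1 (monomial m c)) := by
  set k := m.sum (fun _ n => n) with hk
  have hk2 : (k : ℝ) + 2 ≠ 0 := by positivity
  set v : MvP3 := monomial m (c / (k + 2)) with hv
  have hvdeg : v.totalDegree ≤ k := (totalDegree_monomial_le _ _).trans_eq rfl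
  have hsum : (m 0 : ℝ) + m 1 + m 2 = k := by
    rw [hk, Finsupp.sum_fintype _ _ (fun _ => rfl), Fin.sum_univ_three]
    push_cast
    ring
  refine ⟨![X 2 * v, 0, -(X 0 * v)], pderiv 1 v, fun i => ?_, ?_, fun j => ?_⟩
  · fin_cases i
    · show totalDegree (X 2 * v) ≤ ℓ + 1
      refine (totalDegree_mul _ _).trans ?_
      have := totalDegree_X (R := ℝ) (2 : Fin 3)
      omega
    · show totalDegree (0 : MvP3) ≤ ℓ + 1
      simp
    · show totalDegree (-(X 0 * v)) ≤ ℓ + 1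
      rw [totalDegree_neg]
      refine (totalDegree_mul _ _).trans ?_
      have := totalDegree_X (R := ℝ) (0 : Fin 3)
      omega
  · by_cases h0 : 1 ≤ m 1
    · left
      have h1 := finsupp_sum_sub_single (m := m) (i := 1) h0
      have h2 : (pderiv 1 v).totalDegree ≤ (m - Finsupp.single 1 1).sum (fun _ n => n) := by
        rw [hv, pderiv_monomial]
        exact (totalDegree_monomial_le _ _).trans_eq rfl
      omega
    · right
      have h00 : m 1 = 0 := by omega
      rw [hv, pderiv_monomial, h00]
      simp
  · have e0 := X_mul_pderiv_monomial 0 m (c / (k + 2))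
    have e1 := X_mul_pderiv_monomial 1 m (c / (k + 2))
    have e2 := X_mul_pderiv_monomial 2 m (c / (k + 2))
    rw [← hv] at e0 e1 e2
    fin_cases j
    · show (0 : MvP3) = curl3 _ 0 + X 0 * pderiv 1 v
      simp [curl3, pderiv_mul, pderiv_X_of_ne (show (0 : Fin 3) ≠ 1 by decide),
        pderiv_X_of_ne (show (2 : Fin 3) ≠ 1 by decide)]
    · show monomial m c = curl3 _ 1 + X 1 * pderiv 1 v
      have expand : curl3 ![X 2 * v, 0, -(X 0 * v)] 1
          = v + X 2 * pderiv 2 v + (v + X 0 * pderiv 0 v) := by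
        simp [curl3, pderiv_mul]
        ring
      rw [expand, e2, e0, e1, hv, ← map_add, ← map_add, ← map_add, ← map_add]
      congr 1
      have hdc : c / ((k : ℝ) + 2) * ((k : ℝ) + 2) = c := div_mul_cancel₀ c hk2
      linear_combination (-(c / ((k : ℝ) + 2))) * hsum - hdc
    · show (0 : MvP3) = curl3 _ 2 + X 2 * pderiv 1 v
      simp [curl3, pderiv_mul, pderiv_X_of_ne (show (0 : Fin 3) ≠ 1 by decide),
        pderiv_X_of_ne (show (2 : Fin 3) ≠ 1 by decide)]

lemma good0_single2 {ℓ : ℕ} (m : Fin 3 →₀ ℕ) (c : ℝ) (h : m.sum (fun _ n => n) ≤ ℓ) :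
    Good0 ℓ (Pi.single 2 (monomial m c)) := by
  set k := m.sum (fun _ n => n) with hk
  have hk2 : (k : ℝ) + 2 ≠ 0 := by positivity
  set v : MvP3 := monomial m (c / (k + 2)) with hv
  have hvdeg : v.totalDegree ≤ k := (totalDegree_monomial_le _ _).trans_eq rfl
  have hsum : (m 0 : ℝ) + m 1 + m 2 = k := by
    rw [hk, Finsupp.sum_fintype _ _ (fun _ => rfl), Fin.sum_univ_three]
    push_cast
    ring
  refine ⟨![-(X 1 * v), X 0 * v, 0], pderiv 2 v, fun i => ?_, ?_, fun j => ?_⟩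
  · fin_cases i
    · show totalDegree (-(X 1 * v)) ≤ ℓ + 1
      rw [totalDegree_neg]
      refine (totalDegree_mul _ _).trans ?_
      have := totalDegree_X (R := ℝ) (1 : Fin 3)
      omega
    · show totalDegree (X 0 * v) ≤ ℓ + 1
      refine (totalDegree_mul _ _).trans ?_
      have := totalDegree_X (R := ℝ) (0 : Fin 3)
      omega
    · show totalDegree (0 : MvP3) ≤ ℓ + 1
      simp
  · by_cases h0 : 1 ≤ m 2
    · left
      have h1 := finsupp_sum_sub_single (m := m) (i := 2) h0
      have h2 : (pderiv 2 v).totalDegree ≤ (m - Finsupp.single 2 1).sum (fun _ n => n) := by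
        rw [hv, pderiv_monomial]
        exact (totalDegree_monomial_le _ _).trans_eq rfl
      omega
    · right
      have h00 : m 2 = 0 := by omega
      rw [hv, pderiv_monomial, h00]
      simp
  · have e0 := X_mul_pderiv_monomial 0 m (c / (k + 2))
    have e1 := X_mul_pderiv_monomial 1 m (c / (k + 2))
    have e2 := X_mul_pderiv_monomial 2 m (c / (k + 2))
    rw [← hv] at e0 e1 e2
    fin_cases j
    · show (0 : MvP3) = curl3 _ 0 + X 0 * pderiv 2 v
      simp [curl3, pderiv_mul, pderiv_X_of_ne (show (0 : Fin 3) ≠ 2 by decide),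
        pderiv_X_of_ne (show (1 : Fin 3) ≠ 2 by decide)]
    · show (0 : MvP3) = curl3 _ 1 + X 1 * pderiv 2 v
      simp [curl3, pderiv_mul, pderiv_X_of_ne (show (0 : Fin 3) ≠ 2 by decide),
        pderiv_X_of_ne (show (1 : Fin 3) ≠ 2 by decide)]
    · show monomial m c = curl3 _ 2 + X 2 * pderiv 2 v
      have expand : curl3 ![-(X 1 * v), X 0 * v, 0] 2
          = v + X 0 * pderiv 0 v + (v + X 1 * pderiv 1 v) := by
        simp [curl3, pderiv_mul]
        ring
      rw [expand, e0, e1, e2, hv, ← map_add, ← map_add, ← map_add, ← map_add]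
      congr 1
      have hdc : c / ((k : ℝ) + 2) * ((k : ℝ) + 2) = c := div_mul_cancel₀ c hk2
      linear_combination (-(c / ((k : ℝ) + 2))) * hsum - hdc

lemma good0_all {ℓ : ℕ} (p : Fin 3 → MvP3) (hp : ∀ j, (p j).totalDegree ≤ ℓ) :
    Good0 ℓ p := by
  have hsingle : ∀ j : Fin 3, Good0 ℓ (Pi.single j (p j)) := by
    intro j
    have hrw : Pi.single j (p j)
        = ∑ m ∈ (p j).support, Pi.single (M := fun _ : Fin 3 => MvP3) j
            (monomial m (coeff m (p j))) := by
      funext i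
      rcases eq_or_ne i j with rfl | hij
      · simp only [Finset.sum_apply, Pi.single_eq_same]
        exact (support_sum_monomial_coeff (p i)).symm
      · simp [Finset.sum_apply, Pi.single_eq_of_ne hij]
    rw [hrw]
    refine Finset.sum_induction _ _ (fun a b ha hb => good0_add ha hb) (good0_zero ℓ) ?_
    intro m hm
    have hdeg : m.sum (fun _ n => n) ≤ ℓ := (le_totalDegree hm).trans (hp j)
    fin_cases j
    · exact good0_single0 m _ hdeg
    · exact good0_single1 m _ hdeg
    · exact good0_single2 m _ hdeg
  have hdecomp : p = (Pi.single (M := fun _ : Fin 3 => MvP3) 0 (p 0))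
      + (Pi.single (M := fun _ : Fin 3 => MvP3) 1 (p 1))
      + (Pi.single (M := fun _ : Fin 3 => MvP3) 2 (p 2)) := by
    funext j
    fin_cases j <;> simp [Pi.single_apply]
  rw [hdecomp]
  exact good0_add (good0_add (hsingle 0) (hsingle 1)) (hsingle 2)

lemma sh_curl3 (c : Fin 3 → ℝ) (w : Fin 3 → MvP3) (j : Fin 3) :
    sh c (curl3 w j) = curl3 (fun i => sh c (w i)) j := by
  fin_cases j <;> simp [curl3, map_sub, pderiv_sh]

lemma main_exists (ℓ : ℕ) (xT : Fin 3 → ℝ) (p : Fin 3 → MvP3)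
    (hp : ∀ j, (p j).totalDegree ≤ ℓ) :
    ∃ w : Fin 3 → MvP3, ∃ q : MvP3, (∀ i, (w i).totalDegree ≤ ℓ + 1) ∧
      (q.totalDegree + 1 ≤ ℓ ∨ q = 0) ∧
      ∀ j, p j = curl3 w j + (X j - C (xT j)) * q := by
  obtain ⟨w', q', hw', hq', hp'⟩ :=
    good0_all (ℓ := ℓ) (fun j => sh xT (p j))
      (fun j => (tdeg_sh_le _ _).trans (hp j))
  refine ⟨fun i => sh (-xT) (w' i), sh (-xT) q', fun i => (tdeg_sh_le _ _).trans (hw' i), ?_,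
    fun j => ?_⟩
  · rcases hq' with hq' | rfl
    · left
      have := tdeg_sh_le (-xT) q'
      omega
    · right; exact map_zero _
  · have := congrArg (sh (-xT)) (hp' j)
    rw [sh_neg_sh] at this
    rw [this, map_add, map_mul, sh_curl3, sh_X]
    congr 2
    simp [sub_eq_add_neg, C_neg]

lemma main_unique (xT : Fin 3 → ℝ) (w : Fin 3 → MvP3) (q : MvP3)
    (h : ∀ j, curl3 w j = (X j - C (xT j)) * q) : q = 0 := by
  have hdiv : pderiv 0 (curl3 w 0) + pderiv 1 (curl3 w 1) + pderiv 2 (curl3 w 2) = 0 :=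
    div_curl3 w
  rw [h 0, h 1, h 2] at hdiv
  simp only [pderiv_mul, map_sub, pderiv_X_self, pderiv_C, sub_zero] at hdiv
  -- hdiv : 1 * q + (X 0 - C (xT 0)) * pderiv 0 q + (1 * q + (X 1 - C (xT 1)) * pderiv 1 q)
  --   + (1 * q + (X 2 - C (xT 2)) * pderiv 2 q) = 0
  have h2 : C 3 * q + ((X 0 - C (xT 0)) * pderiv 0 q + (X 1 - C (xT 1)) * pderiv 1 q
      + (X 2 - C (xT 2)) * pderiv 2 q) = 0 := by
    have hC3 : (C (3 : ℝ) : MvP3) = 3 := map_ofNat C 3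
    rw [← hdiv, hC3]
    ring
  have h3 := congrArg (sh xT) h2
  simp only [map_add, map_mul, map_sub, sh_X, map_zero] at h3
  have hC : ∀ a : ℝ, sh xT (C a) = C a := fun a => by simp [sh]
  rw [hC 3, hC (xT 0), hC (xT 1), hC (xT 2)] at h3
  have h4 : C 3 * sh xT q + (X 0 * pderiv 0 (sh xT q) + X 1 * pderiv 1 (sh xT q)
      + X 2 * pderiv 2 (sh xT q)) = 0 := by
    rw [← h3]
    simp only [pderiv_sh]
    try ring
  have h5 := euler_zero _ h4
  have := congrArg (sh (-xT)) h5
  rwa [sh_neg_sh, map_zero] at this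


lemma curl3_sub (w w' : Fin 3 → MvP3) (j : Fin 3) :
    curl3 (w - w') j = curl3 w j - curl3 w' j := by
  fin_cases j <;> simp [curl3] <;> ring

lemma tdeg_curl3_le {ℓ : ℕ} (w : Fin 3 → MvP3) (hw : ∀ i, (w i).totalDegree ≤ ℓ + 1)
    (j : Fin 3) : (curl3 w j).totalDegree ≤ ℓ := by
  fin_cases j
  · show (pderiv 1 (w 2) - pderiv 2 (w 1)).totalDegree ≤ ℓ
    exact (totalDegree_sub _ _).trans
      (max_le (tdeg_pderiv_le _ _ (hw 2)) (tdeg_pderiv_le _ _ (hw 1)))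
  · show (pderiv 2 (w 0) - pderiv 0 (w 2)).totalDegree ≤ ℓ
    exact (totalDegree_sub _ _).trans
      (max_le (tdeg_pderiv_le _ _ (hw 0)) (tdeg_pderiv_le _ _ (hw 2)))
  · show (pderiv 0 (w 1) - pderiv 1 (w 0)).totalDegree ≤ ℓ
    exact (totalDegree_sub _ _).trans
      (max_le (tdeg_pderiv_le _ _ (hw 1)) (tdeg_pderiv_le _ _ (hw 0)))

end

end Helmholtz3DAux

open Helmholtz3DAux in
/-- Direct decomposition `P^ℓ(T)³ = R^ℓ(T) ⊕ R^{c,ℓ}(T)`. -/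
theorem Pvec_direct_sum_Roly_RolyC_3d (ℓ : ℕ) (xT : Fin 3 → ℝ) :
    (∀ v, v ∈ PvecT ℓ ↔ ∃ r ∈ RolyT ℓ, ∃ c ∈ RolyCT ℓ xT, v = r + c) ∧
    (∀ r r' c c', r ∈ RolyT ℓ → r' ∈ RolyT ℓ → c ∈ RolyCT ℓ xT → c' ∈ RolyCT ℓ xT →
      r + c = r' + c' → r = r' ∧ c = c') := by
  constructor
  · intro v
    constructor
    · rintro ⟨p, hdeg, hv⟩
      obtain ⟨w, q, hw, hq, hpw⟩ := main_exists ℓ xT p hdeg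
      refine ⟨fun x i => eval x (curl3 w i), ⟨w, hw, fun x => ⟨?_, ?_, ?_⟩⟩,
              fun x i => (x i - xT i) * eval x q, ⟨q, hq, fun x i => rfl⟩, ?_⟩
      · simp [curl3]
      · simp [curl3]
      · simp [curl3]
      · funext x
        funext i
        show v x i = eval x (curl3 w i) + (x i - xT i) * eval x q
        rw [hv x i, hpw i, map_add, map_mul, map_sub, eval_X, eval_C]
    · rintro ⟨r, ⟨w, hw, hr⟩, c, ⟨q, hq, hc⟩, rfl⟩
      refine ⟨fun i => curl3 w i + (X i - C (xT i)) * q, fun i => ?_, fun x i => ?_⟩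
      · refine (totalDegree_add _ _).trans (max_le (tdeg_curl3_le w hw i) ?_)
        rcases hq with hq | rfl
        · refine (totalDegree_mul _ _).trans ?_
          have h1 : (X i - C (xT i) : MvP3).totalDegree ≤ 1 :=
            (totalDegree_sub _ _).trans (by simp [totalDegree_X, totalDegree_C])
          omega
        · simp
      · show r x i + c x i = _
        rw [map_add, map_mul, map_sub, eval_X, eval_C, hc x i]
        have hrx := hr x
        congr 1
        fin_cases i
        · show r x 0 = eval x (curl3 w 0)
          rw [hrx.1]; simp [curl3]
        · show r x 1 = eval x (curl3 w 1)
          rw [hrx.2.1]; simp [curl3]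
        · show r x 2 = eval x (curl3 w 2)
          rw [hrx.2.2]; simp [curl3]
  · rintro r r' c c' ⟨w, hw, hr⟩ ⟨w', hw', hr'⟩ ⟨q, hq, hc⟩ ⟨q', hq', hc'⟩ heq
    have hpt : ∀ (x : Fin 3 → ℝ) (i : Fin 3), r x i + c x i = r' x i + c' x i :=
      fun x i => congrFun (congrFun heq x) i
    have hpoly : ∀ i : Fin 3, curl3 (w - w') i = (X i - C (xT i)) * (q' - q) := by
      intro i
      apply MvPolynomial.funext
      intro x
      rw [curl3_sub, map_sub, map_mul, map_sub, map_sub, eval_X, eval_C]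
      fin_cases i
      · show eval x (curl3 w 0) - eval x (curl3 w' 0) = (x 0 - xT 0) * (eval x q' - eval x q)
        have hcc := hpt x 0
        rw [hc x 0, hc' x 0] at hcc
        have e1 : eval x (curl3 w 0) = r x 0 := by rw [(hr x).1]; simp [curl3]
        have e2 : eval x (curl3 w' 0) = r' x 0 := by rw [(hr' x).1]; simp [curl3]
        rw [e1, e2]
        linear_combination hcc
      · show eval x (curl3 w 1) - eval x (curl3 w' 1) = (x 1 - xT 1) * (eval x q' - eval x q)
        have hcc := hpt x 1
        rw [hc x 1, hc' x 1] at hcc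
        have e1 : eval x (curl3 w 1) = r x 1 := by rw [(hr x).2.1]; simp [curl3]
        have e2 : eval x (curl3 w' 1) = r' x 1 := by rw [(hr' x).2.1]; simp [curl3]
        rw [e1, e2]
        linear_combination hcc
      · show eval x (curl3 w 2) - eval x (curl3 w' 2) = (x 2 - xT 2) * (eval x q' - eval x q)
        have hcc := hpt x 2
        rw [hc x 2, hc' x 2] at hcc
        have e1 : eval x (curl3 w 2) = r x 2 := by rw [(hr x).2.2]; simp [curl3]
        have e2 : eval x (curl3 w' 2) = r' x 2 := by rw [(hr' x).2.2]; simp [curl3]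
        rw [e1, e2]
        linear_combination hcc
    have hqq : q' = q := by
      have h0 := main_unique xT (w - w') (q' - q) hpoly
      exact sub_eq_zero.mp h0
    have hcc' : c = c' := by
      funext x
      funext i
      rw [hc x i, hc' x i, hqq]
    refine ⟨?_, hcc'⟩
    have : r + c = r' + c := by rw [heq, hcc']
    exact add_right_cancel this
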